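/- Suppose P(t) ∈ ℂ[t] has odd degree ≥ 3, no multiple roots, and t | P. Then the unit group of R_2(P) = ℂ[t,t⁻¹,u]/(u² - P(t)) equals {c·t^k : c ∈ ℂ*, k ∈ ℤ}, and is isomorphic as a group to ℂ* × ℤ. -/

import Mathlib

open Polynomial

/-- The defining ideal of `R_2(P) = ℂ[t,t⁻¹,u]/(u² - P(t))`. -/
noncomputable abbrev R2ideal (P : Polynomial ℂ) : Ideal (Polynomial (LaurentPolynomial ℂ)) :=
  Ideal.span {(X : Polynomial (LaurentPolynomial ℂ)) ^ 2 - C (Polynomial.toLaurent P)}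

/-- `R_2(P) = ℂ[t,t⁻¹,u]/(u² - P(t))`. -/
abbrev R2P (P : Polynomial ℂ) : Type :=
  Polynomial (LaurentPolynomial ℂ) ⧸ R2ideal P

open LaurentPolynomial

lemma monomial_of_deg_eq_trail {q : ℂ[X]} (hq : q ≠ 0)
    (h : q.natDegree = q.natTrailingDegree) :
    q = Polynomial.C q.leadingCoeff * X ^ q.natDegree := by
  ext n
  rcases lt_trichotomy n q.natDegree with hn | hn | hn
  · rw [coeff_eq_zero_of_lt_natTrailingDegree (h ▸ hn)]
    rw [coeff_C_mul, coeff_X_pow, if_neg hn.ne, mul_zero]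
  · subst hn
    rw [coeff_C_mul, coeff_X_pow, if_pos rfl, mul_one, leadingCoeff]
  · rw [coeff_eq_zero_of_natDegree_lt hn]
    rw [coeff_C_mul, coeff_X_pow, if_neg hn.ne', mul_zero]

lemma dvd_X_pow_monomial {q : ℂ[X]} {M : ℕ} (hdvd : q ∣ X ^ M) :
    q ≠ 0 ∧ q = Polynomial.C q.leadingCoeff * X ^ q.natDegree := by
  obtain ⟨r, hr⟩ := hdvd
  have hX : (X : ℂ[X]) ^ M ≠ 0 := pow_ne_zero _ X_ne_zero
  have hq : q ≠ 0 := fun h => hX (by simp [hr, h])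
  have hr0 : r ≠ 0 := fun h => hX (by simp [hr, h])
  refine ⟨hq, ?_⟩
  have hdeg : q.natDegree + r.natDegree = M := by
    have := natDegree_mul hq hr0
    rw [← hr, natDegree_X_pow] at this
    omega
  have htr : q.natTrailingDegree + r.natTrailingDegree = M := by
    have := natTrailingDegree_mul hq hr0
    rw [← hr, X_pow_eq_monomial, natTrailingDegree_monomial one_ne_zero] at this
    omega
  have h1 := q.natTrailingDegree_le_natDegree
  have h2 := r.natTrailingDegree_le_natDegree
  exact monomial_of_deg_eq_trail hq (by omega)

lemma laurent_unit {x y : LaurentPolynomial ℂ} (h : x * y = 1) :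
    ∃ (c : ℂ) (k : ℤ), c ≠ 0 ∧ x = LaurentPolynomial.C c * T k := by
  obtain ⟨n, A, hA⟩ := x.exists_T_pow
  obtain ⟨m, B, hB⟩ := y.exists_T_pow
  have key : A * B = X ^ (n + m) := by
    apply toLaurent_injective
    rw [map_mul, hA, hB, toLaurent_X_pow, mul_mul_mul_comm, h, one_mul, ← T_add]
    push_cast; ring_nf
  obtain ⟨hA0, hmono⟩ := dvd_X_pow_monomial ⟨B, key.symm⟩
  refine ⟨A.leadingCoeff, (A.natDegree : ℤ) - n, leadingCoeff_ne_zero.mpr hA0, ?_⟩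
  have hx : x = toLaurent A * T (-(n : ℤ)) := by
    rw [hA, mul_T_assoc]; simp
  rw [hx]
  conv_lhs => rw [hmono]
  rw [map_mul, Polynomial.toLaurent_C, toLaurent_X_pow, mul_T_assoc, sub_eq_add_neg]


lemma key_poly {P : ℂ[X]} (hodd : Odd P.natDegree) (h3 : 3 ≤ P.natDegree)
    (hsep : P.Separable) (hdvd : X ∣ P)
    {A B : ℂ[X]} {c : ℂ} {K : ℕ} (hc : c ≠ 0)
    (heq : A ^ 2 - P * B ^ 2 = Polynomial.C c * X ^ K) :
    B = 0 ∧ A ≠ 0 ∧ A = Polynomial.C A.leadingCoeff * X ^ A.natDegree := by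
  have hP0 : P ≠ 0 := fun h => by simp [h] at h3
  have hcf0 : P.coeff 0 = 0 := X_dvd_iff.mp hdvd
  have hcf1 : P.coeff 1 ≠ 0 := by
    intro h1
    have hdd : (X : ℂ[X]) ^ 2 ∣ P :=
      X_pow_dvd_iff.mpr (by intro d hd; interval_cases d <;> assumption)
    exact Polynomial.not_isUnit_X (hsep.squarefree X (by simpa [sq] using hdd))
  have htP : P.natTrailingDegree = 1 :=
    le_antisymm (natTrailingDegree_le_of_ne_zero hcf1)
      (le_natTrailingDegree hP0 (by intro m hm; interval_cases m; exact hcf0))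
  have hodd' : P.natDegree % 2 = 1 := Nat.odd_iff.mp hodd
  by_cases hB : B = 0
  · subst hB
    simp only [ne_eq, OfNat.ofNat_ne_zero, not_false_eq_true, zero_pow, mul_zero,
      sub_zero] at heq
    have hA0 : A ≠ 0 := by
      rintro rfl
      apply hc
      have := congrArg (fun q => Polynomial.coeff q K) heq
      simpa [coeff_X_pow] using this.symm
    refine ⟨rfl, hA0, ?_⟩
    have hd : (A ^ 2).natDegree = K := by rw [heq]; exact natDegree_C_mul_X_pow K c hc
    have ht : (A ^ 2).natTrailingDegree = K := by
      rw [heq, C_mul_X_pow_eq_monomial, natTrailingDegree_monomial hc]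
    have hd2 : (A ^ 2).natDegree = 2 * A.natDegree := by rw [natDegree_pow]
    have ht2 : (A ^ 2).natTrailingDegree = 2 * A.natTrailingDegree := by
      rw [pow_two, natTrailingDegree_mul hA0 hA0]; ring
    exact monomial_of_deg_eq_trail hA0 (by omega)
  · exfalso
    have hB2 : B ^ 2 ≠ 0 := pow_ne_zero _ hB
    have hG0 : P * B ^ 2 ≠ 0 := mul_ne_zero hP0 hB2
    have hdG : (P * B ^ 2).natDegree = P.natDegree + 2 * B.natDegree := by
      rw [natDegree_mul hP0 hB2, natDegree_pow]
    have htG : (P * B ^ 2).natTrailingDegree = 1 + 2 * B.natTrailingDegree := by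
      rw [natTrailingDegree_mul hP0 hB2, htP, pow_two, natTrailingDegree_mul hB hB]; ring
    have hcoeff : ∀ n, (A ^ 2).coeff n - (P * B ^ 2).coeff n = if n = K then c else 0 := by
      intro n
      rw [← coeff_sub, heq, coeff_C_mul, coeff_X_pow]
      simp
    have hBle := B.natTrailingDegree_le_natDegree
    by_cases hA : A = 0
    · have h1 : (P * B ^ 2).coeff ((P * B ^ 2).natDegree) ≠ 0 := by
        rw [← leadingCoeff]; exact leadingCoeff_ne_zero.mpr hG0
      have h2 : (P * B ^ 2).coeff ((P * B ^ 2).natTrailingDegree) ≠ 0 :=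
        coeff_natTrailingDegree_ne_zero.mpr hG0
      have e1 := hcoeff (P * B ^ 2).natDegree
      have e2 := hcoeff (P * B ^ 2).natTrailingDegree
      simp only [hA, ne_eq, OfNat.ofNat_ne_zero, not_false_eq_true, zero_pow, coeff_zero,
        zero_sub, neg_eq_iff_eq_neg] at e1 e2
      have k1 : (P * B ^ 2).natDegree = K := by
        by_contra hne; rw [if_neg hne, neg_zero] at e1; exact h1 e1
      have k2 : (P * B ^ 2).natTrailingDegree = K := by
        by_contra hne; rw [if_neg hne, neg_zero] at e2; exact h2 e2
      omega
    · have hA2 : A ^ 2 ≠ 0 := pow_ne_zero _ hA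
      have hdF : (A ^ 2).natDegree = 2 * A.natDegree := by rw [natDegree_pow]
      have htF : (A ^ 2).natTrailingDegree = 2 * A.natTrailingDegree := by
        rw [pow_two, natTrailingDegree_mul hA hA]; ring
      have hlF : (A ^ 2).coeff ((A ^ 2).natDegree) ≠ 0 := by
        rw [← leadingCoeff]; exact leadingCoeff_ne_zero.mpr hA2
      have hlG : (P * B ^ 2).coeff ((P * B ^ 2).natDegree) ≠ 0 := by
        rw [← leadingCoeff]; exact leadingCoeff_ne_zero.mpr hG0
      have htF0 : (A ^ 2).coeff ((A ^ 2).natTrailingDegree) ≠ 0 :=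
        coeff_natTrailingDegree_ne_zero.mpr hA2
      have htG0 : (P * B ^ 2).coeff ((P * B ^ 2).natTrailingDegree) ≠ 0 :=
        coeff_natTrailingDegree_ne_zero.mpr hG0
      have topK : K = (A ^ 2).natDegree ∨ K = (P * B ^ 2).natDegree := by
        rcases lt_trichotomy ((A ^ 2).natDegree) ((P * B ^ 2).natDegree) with h | h | h
        · right
          have e := hcoeff (P * B ^ 2).natDegree
          rw [coeff_eq_zero_of_natDegree_lt h, zero_sub] at e
          by_contra hne
          rw [if_neg (by omega : ¬ (P * B ^ 2).natDegree = K)] at e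
          exact hlG (by simpa using e)
        · omega
        · left
          have e := hcoeff (A ^ 2).natDegree
          rw [coeff_eq_zero_of_natDegree_lt h, sub_zero] at e
          by_contra hne
          rw [if_neg (by omega : ¬ (A ^ 2).natDegree = K)] at e
          exact hlF e
      have botK : K = (A ^ 2).natTrailingDegree ∨ K = (P * B ^ 2).natTrailingDegree := by
        rcases lt_trichotomy ((A ^ 2).natTrailingDegree) ((P * B ^ 2).natTrailingDegree)
          with h | h | h
        · left
          have e := hcoeff (A ^ 2).natTrailingDegree
          rw [coeff_eq_zero_of_lt_natTrailingDegree h, sub_zero] at e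
          by_contra hne
          rw [if_neg (by omega : ¬ (A ^ 2).natTrailingDegree = K)] at e
          exact htF0 e
        · omega
        · right
          have e := hcoeff (P * B ^ 2).natTrailingDegree
          rw [coeff_eq_zero_of_lt_natTrailingDegree h, zero_sub] at e
          by_contra hne
          rw [if_neg (by omega : ¬ (P * B ^ 2).natTrailingDegree = K)] at e
          exact htG0 (by simpa using e)
      rcases topK with h1 | h1 <;> rcases botK with h2 | h2
      · -- A is a monomial
        have hmono := monomial_of_deg_eq_trail hA (by omega)
        have hF : A ^ 2 = Polynomial.C (A.leadingCoeff ^ 2) * X ^ K := by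
          conv_lhs => rw [hmono]
          rw [mul_pow, ← C_pow, ← pow_mul, mul_comm A.natDegree 2,
            (show 2 * A.natDegree = K by omega)]
        have hG : P * B ^ 2 = Polynomial.C (A.leadingCoeff ^ 2 - c) * X ^ K := by
          rw [map_sub, sub_mul, ← hF, ← heq]; ring
        by_cases hz : A.leadingCoeff ^ 2 - c = 0
        · rw [hz, map_zero, zero_mul] at hG; exact hG0 hG
        · have d1 : (P * B ^ 2).natDegree = K := by rw [hG]; exact natDegree_C_mul_X_pow K _ hz
          have d2 : (P * B ^ 2).natTrailingDegree = K := by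
            rw [hG, C_mul_X_pow_eq_monomial, natTrailingDegree_monomial hz]
          omega
      · omega
      · omega
      · omega


lemma laurent_key {P : ℂ[X]} (hodd : Odd P.natDegree) (h3 : 3 ≤ P.natDegree)
    (hsep : P.Separable) (hdvd : X ∣ P)
    {a b : LaurentPolynomial ℂ} {c : ℂ} {k : ℤ} (hc : c ≠ 0)
    (heq : a ^ 2 - (Polynomial.toLaurent P) * b ^ 2 = LaurentPolynomial.C c * T k) :
    b = 0 ∧ ∃ (α : ℂ) (m : ℤ), α ≠ 0 ∧ a = LaurentPolynomial.C α * T m := by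
  obtain ⟨n, A₁, hA₁⟩ := a.exists_T_pow
  obtain ⟨m, B₁, hB₁⟩ := b.exists_T_pow
  obtain ⟨N, A, B, hA, hB⟩ : ∃ (N : ℕ) (A B : ℂ[X]),
      Polynomial.toLaurent A = a * T (N : ℤ) ∧ Polynomial.toLaurent B = b * T (N : ℤ) := by
    refine ⟨n + m, A₁ * X ^ m, B₁ * X ^ n, ?_, ?_⟩
    · rw [map_mul, hA₁, toLaurent_X_pow, mul_T_assoc]; norm_cast
    · rw [map_mul, hB₁, toLaurent_X_pow, mul_T_assoc]
      push_cast
      rw [add_comm (m : ℤ) (n : ℤ)]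
  have key : Polynomial.toLaurent (A ^ 2 - P * B ^ 2) =
      LaurentPolynomial.C c * T (k + 2 * N) := by
    simp only [map_sub, map_pow, map_mul]
    rw [hA, hB]
    have : (a * T N) ^ 2 - Polynomial.toLaurent P * (b * T N) ^ 2 =
        (a ^ 2 - Polynomial.toLaurent P * b ^ 2) * T N ^ 2 := by ring
    rw [this, heq, T_pow, mul_assoc, ← T_add]
    push_cast; ring_nf
  have hne : A ^ 2 - P * B ^ 2 ≠ 0 := by
    intro h0
    rw [h0, map_zero] at key
    have h2 : (LaurentPolynomial.C c * T (k + 2 * N)).coeff.support = {k + 2 * (N : ℤ)} :=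
      support_C_mul_T_of_ne_zero hc _
    rw [← key] at h2
    exact Finset.singleton_ne_empty _ h2.symm
  have hsupp : (k + 2 * N) ∈ (Polynomial.toLaurent (A ^ 2 - P * B ^ 2)).coeff.support := by
    rw [key, support_C_mul_T_of_ne_zero hc]
    simp
  rw [LaurentPolynomial.support_coeff_toLaurent] at hsupp
  obtain ⟨K, -, hK⟩ := Finset.mem_map.mp hsupp
  have hpoly : A ^ 2 - P * B ^ 2 = Polynomial.C c * X ^ K := by
    apply toLaurent_injective
    have hK' : (K : ℤ) = k + 2 * N := hK
    rw [key, Polynomial.toLaurent_C_mul_X_pow, hK']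
  obtain ⟨hB0, hA0, hmono⟩ := key_poly hodd h3 hsep hdvd hc hpoly
  have hb : b = 0 := by
    have h0 : b * T (N : ℤ) = 0 := by rw [← hB, hB0, map_zero]
    have := congrArg (· * T (-(N : ℤ))) h0
    simpa [mul_T_assoc] using this
  refine ⟨hb, A.leadingCoeff, (A.natDegree : ℤ) - N, leadingCoeff_ne_zero.mpr hA0, ?_⟩
  have hx : a = Polynomial.toLaurent A * T (-(N : ℤ)) := by
    rw [hA, mul_T_assoc]; simp
  rw [hx]
  conv_lhs => rw [hmono]
  rw [map_mul, Polynomial.toLaurent_C, toLaurent_X_pow, mul_T_assoc, sub_eq_add_neg]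


noncomputable section
namespace R2aux

variable (P : ℂ[X])

abbrev f : (LaurentPolynomial ℂ)[X] := X ^ 2 - Polynomial.C (Polynomial.toLaurent P)

lemma f_monic : (f P).Monic := monic_X_pow_sub_C _ two_ne_zero

lemma f_deg : (f P).degree = 2 := degree_X_pow_sub_C (by norm_num) _

lemma f_natdeg : (f P).natDegree = 2 := natDegree_X_pow_sub_C

lemma algebraMap_inj :
    Function.Injective (algebraMap (LaurentPolynomial ℂ) (AdjoinRoot (f P))) := by
  intro x y hxy
  have h0 : AdjoinRoot.mk (f P) (Polynomial.C (x - y)) = 0 := by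
    have : algebraMap _ (AdjoinRoot (f P)) (x - y) = 0 := by rw [map_sub, hxy, sub_self]
    exact this
  rw [AdjoinRoot.mk_eq_zero] at h0
  have hd : (Polynomial.C (x - y)).degree < (f P).degree := by
    refine lt_of_le_of_lt degree_C_le ?_
    rw [f_deg]
    norm_num
  have := Polynomial.eq_zero_of_dvd_of_degree_lt h0 hd
  have := Polynomial.C_injective (by rw [this, map_zero] : Polynomial.C (x - y) = Polynomial.C 0)
  exact sub_eq_zero.mp this

lemma root_sq :
    (AdjoinRoot.root (f P)) ^ 2 = algebraMap _ _ (Polynomial.toLaurent P) := by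
  have h : AdjoinRoot.mk (f P) (f P) = 0 := AdjoinRoot.mk_self
  rw [map_sub, map_pow, AdjoinRoot.mk_X, sub_eq_zero] at h
  rw [h, AdjoinRoot.mk_C, AdjoinRoot.algebraMap_eq]

lemma aeval_neg_root : (Polynomial.aeval (-(AdjoinRoot.root (f P)))) (f P) = 0 := by
  rw [map_sub, map_pow, Polynomial.aeval_X, Polynomial.aeval_C, neg_sq, root_sq, sub_self]

def sigma : AdjoinRoot (f P) →ₐ[LaurentPolynomial ℂ] AdjoinRoot (f P) :=
  AdjoinRoot.liftAlgHom _ (Algebra.ofId _ _) (-(AdjoinRoot.root (f P))) (aeval_neg_root P)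

lemma norm_eq (x y : LaurentPolynomial ℂ) :
    AdjoinRoot.mk (f P) (Polynomial.C x + Polynomial.C y * X) *
      sigma P (AdjoinRoot.mk (f P) (Polynomial.C x + Polynomial.C y * X)) =
      algebraMap _ _ (x ^ 2 - Polynomial.toLaurent P * y ^ 2) := by
  rw [sigma]
  show _ * (Polynomial.aeval (-(AdjoinRoot.root (f P)))) (Polynomial.C x + Polynomial.C y * X) = _
  have h1 : AdjoinRoot.mk (f P) (Polynomial.C x + Polynomial.C y * X) =
      algebraMap _ _ x + algebraMap _ _ y * AdjoinRoot.root (f P) := by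
    rw [map_add, map_mul, AdjoinRoot.mk_X, AdjoinRoot.mk_C, AdjoinRoot.mk_C,
      AdjoinRoot.algebraMap_eq]
  have h2 : (Polynomial.aeval (-(AdjoinRoot.root (f P))))
      (Polynomial.C x + Polynomial.C y * X) =
      algebraMap _ _ x - algebraMap _ _ y * AdjoinRoot.root (f P) := by
    rw [map_add, map_mul, Polynomial.aeval_X, Polynomial.aeval_C, Polynomial.aeval_C]
    ring
  rw [h1, h2]
  have h3 : (algebraMap _ (AdjoinRoot (f P)) x + algebraMap _ _ y * AdjoinRoot.root (f P)) *
      (algebraMap _ _ x - algebraMap _ _ y * AdjoinRoot.root (f P)) =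
      (algebraMap _ _ x) ^ 2 - (algebraMap _ _ y) ^ 2 * (AdjoinRoot.root (f P)) ^ 2 := by
    ring
  rw [h3, root_sq, map_sub, map_pow, map_mul, map_pow]
  ring

lemma mk_modByMonic (g : (LaurentPolynomial ℂ)[X]) :
    AdjoinRoot.mk (f P) (g %ₘ (f P)) = AdjoinRoot.mk (f P) g := by
  rw [AdjoinRoot.mk_eq_mk, Polynomial.modByMonic_eq_sub_mul_div _ (f P)]
  exact ⟨-(g /ₘ (f P)), by ring⟩

lemma exists_rep (z : AdjoinRoot (f P)) : ∃ x y : LaurentPolynomial ℂ,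
    z = AdjoinRoot.mk (f P) (Polynomial.C x + Polynomial.C y * X) := by
  obtain ⟨g, rfl⟩ := AdjoinRoot.mk_surjective z
  refine ⟨(g %ₘ (f P)).coeff 0, (g %ₘ (f P)).coeff 1, ?_⟩
  conv_lhs => rw [← mk_modByMonic P g]
  congr 1
  have hne : f P ≠ 1 := fun h => by
    have := f_natdeg P
    rw [h, natDegree_one] at this
    omega
  have hdeg : (g %ₘ (f P)).natDegree ≤ 1 := by
    have h2 := natDegree_modByMonic_lt g (f_monic P) hne
    rw [f_natdeg] at h2
    omega
  exact (eq_X_add_C_of_natDegree_le_one hdeg).trans (by ring)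

theorem isUnit_iff (hodd : Odd P.natDegree) (h3 : 3 ≤ P.natDegree)
    (hsep : P.Separable) (hdvd : X ∣ P) (z : AdjoinRoot (f P)) :
    IsUnit z ↔ ∃ (c : ℂ) (k : ℤ), c ≠ 0 ∧
      z = algebraMap ℂ (AdjoinRoot (f P)) c *
        AdjoinRoot.mk (f P) (Polynomial.C (T k)) := by
  constructor
  · intro hz
    obtain ⟨u, rfl⟩ := hz
    obtain ⟨x, y, hu⟩ := exists_rep P (u : AdjoinRoot (f P))
    obtain ⟨x', y', hv⟩ := exists_rep P ((u⁻¹ : _ˣ) : AdjoinRoot (f P))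
    have huv : (u : AdjoinRoot (f P)) * ((u⁻¹ : _ˣ) : AdjoinRoot (f P)) = 1 := u.mul_inv
    have hN : (x ^ 2 - Polynomial.toLaurent P * y ^ 2) *
        (x' ^ 2 - Polynomial.toLaurent P * y' ^ 2) = 1 := by
      apply algebraMap_inj P
      rw [map_mul, map_one, ← norm_eq, ← norm_eq, mul_mul_mul_comm, ← map_mul (sigma P),
        ← hu, ← hv, huv, map_one, mul_one]
    obtain ⟨c0, k0, hc0, hx0⟩ := laurent_unit hN
    obtain ⟨hy0, α, m, hα, hxa⟩ := laurent_key hodd h3 hsep hdvd hc0 hx0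
    refine ⟨α, m, hα, ?_⟩
    rw [hu, hy0, map_zero, zero_mul, add_zero, hxa, map_mul, map_mul]
    congr 1
  · rintro ⟨c, k, hc, rfl⟩
    exact ((Ne.isUnit hc).map (algebraMap ℂ (AdjoinRoot (f P)))).mul
      ((isUnit_T k).map ((AdjoinRoot.mk (f P)).comp Polynomial.C))

end R2aux
end

theorem stmt_15 (P : Polynomial ℂ) (hodd : Odd P.natDegree) (h3 : 3 ≤ P.natDegree)
    (hsep : P.Separable) (hdvd : X ∣ P) :
    (∀ z : R2P P, IsUnit z ↔
      ∃ (c : ℂ) (k : ℤ), c ≠ 0 ∧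
        z = (algebraMap ℂ (R2P P) : ℂ →+* R2P P) c *
          Ideal.Quotient.mk (R2ideal P) (C (LaurentPolynomial.T k))) ∧
    Nonempty ((R2P P)ˣ ≃* ℂˣ × Multiplicative ℤ) := by
  have main := R2aux.isUnit_iff P hodd h3 hsep hdvd
  refine ⟨fun z => main z, ?_⟩
  -- the distinguished unit t
  have hT : ∀ j j' : ℤ, Ideal.Quotient.mk (R2ideal P) (C (LaurentPolynomial.T j)) *
      Ideal.Quotient.mk (R2ideal P) (C (LaurentPolynomial.T j')) =
      Ideal.Quotient.mk (R2ideal P) (C (LaurentPolynomial.T (j + j'))) := by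
    intro j j'
    rw [← map_mul, ← map_mul, ← T_add]
  let U : (R2P P)ˣ :=
    ⟨Ideal.Quotient.mk (R2ideal P) (C (LaurentPolynomial.T 1)),
     Ideal.Quotient.mk (R2ideal P) (C (LaurentPolynomial.T (-1))),
     by rw [hT]; norm_num, by rw [hT]; norm_num⟩
  have hU : ∀ k : ℤ, ((U ^ k : (R2P P)ˣ) : R2P P) =
      Ideal.Quotient.mk (R2ideal P) (C (LaurentPolynomial.T k)) := by
    intro k
    induction k using Int.induction_on with
    | zero => simp [T_zero]
    | succ n ih =>
        rw [zpow_add_one, Units.val_mul, ih]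
        exact hT n 1
    | pred n ih =>
        have hinv : ((U⁻¹ : (R2P P)ˣ) : R2P P) =
            Ideal.Quotient.mk (R2ideal P) (C (LaurentPolynomial.T (-1))) := rfl
        have harg : -(n : ℤ) - 1 = -(n : ℤ) + -1 := by ring
        rw [harg, zpow_add, Units.val_mul, ih, zpow_neg_one, hinv, hT]
  let φC : ℂˣ →* (R2P P)ˣ := Units.map (algebraMap ℂ (R2P P)).toMonoidHom
  let φT : Multiplicative ℤ →* (R2P P)ˣ := zpowersHom _ U
  letI : CommGroup (R2P P)ˣ :=
    @Units.instCommGroupUnits (R2P P) (inferInstance : CommMonoid (R2P P))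
  let φ : ℂˣ × Multiplicative ℤ →* (R2P P)ˣ := φC.coprod φT
  have hφval : ∀ (c : ℂˣ) (k : Multiplicative ℤ),
      ((φ (c, k) : (R2P P)ˣ) : R2P P) =
      (algebraMap ℂ (R2P P) : ℂ →+* R2P P) (c : ℂ) *
        Ideal.Quotient.mk (R2ideal P) (C (LaurentPolynomial.T (Multiplicative.toAdd k))) := by
    intro c k
    have : ((φ (c, k) : (R2P P)ˣ) : R2P P) =
        (algebraMap ℂ (R2P P) : ℂ →+* R2P P) (c : ℂ) * ((U ^ (Multiplicative.toAdd k) : (R2P P)ˣ) : R2P P) := by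
      simp [φ, φC, φT, zpowersHom]
    rw [this, hU]
  have hmkC : ∀ q : LaurentPolynomial ℂ,
      Ideal.Quotient.mk (R2ideal P) (C q) = algebraMap _ (AdjoinRoot (R2aux.f P)) q := fun _ => rfl
  have hbij : Function.Bijective φ := by
    constructor
    · rintro ⟨c, k⟩ ⟨c', k'⟩ h
      have hv := congrArg (Units.val) h
      rw [hφval, hφval] at hv
      have halg : ∀ (c : ℂ) (j : ℤ), (algebraMap ℂ (R2P P) : ℂ →+* R2P P) c *
          Ideal.Quotient.mk (R2ideal P) (C (LaurentPolynomial.T j)) =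
          algebraMap (LaurentPolynomial ℂ) (AdjoinRoot (R2aux.f P))
            (LaurentPolynomial.C c * LaurentPolynomial.T j) := by
        intro c j
        rw [map_mul, ← hmkC]
        congr 1
      rw [halg, halg] at hv
      have h2 := R2aux.algebraMap_inj P hv
      rw [← single_eq_C_mul_T, ← single_eq_C_mul_T] at h2
      rcases AddMonoidAlgebra.single_inj.mp h2 with ⟨hk, hc⟩ | ⟨hc, _⟩
      · ext
        · exact hc
        · exact hk
      · exact absurd hc c.ne_zero
    · intro u
      obtain ⟨c, k, hc, hu⟩ := (main (u : R2P P)).mp u.isUnit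
      refine ⟨(Units.mk0 c hc, Multiplicative.ofAdd k), Units.ext ?_⟩
      rw [hφval]
      exact hu.symm
  exact ⟨(MulEquiv.ofBijective φ hbij).symm⟩
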